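/- arXiv:1812.04260 — 2 statements merged into one kernel-verified Lean document; each statement's English description precedes it below -/
import Mathlib

section
/- Let I ⊆ [0,1] be a set of real numbers and let c > 0 be a real number. Then D_c(D(I)) = D_c(I). -/
open Finset in
/-- `I_+`: sums `∑ nᵢ aᵢ ≤ 1` with `aᵢ ∈ I`, `nᵢ` positive integers, together with `0`. -/
def Iplus (I : Set ℝ) : Set ℝ :=
  {x : ℝ | x ≤ 1 ∧ ∃ (r : ℕ), 0 < r ∧ ∃ (a : Fin r → ℝ) (n : Fin r → ℕ),
    (∀ i, a i ∈ I) ∧ (∀ i, 0 < n i) ∧ x = ∑ i, (n i : ℝ) * a i} ∪ {0}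

/-- `D(I) = {(m-1+f)/m ≤ 1 : m ∈ ℕ₊, f ∈ I_+}`. -/
def Dset (I : Set ℝ) : Set ℝ :=
  {x : ℝ | ∃ (m : ℕ) (f : ℝ), 0 < m ∧ f ∈ Iplus I ∧ x = ((m : ℝ) - 1 + f) / m} ∩ Set.Iic 1

/-- `D_c(I) = {(m-1+f+kc)/m ≤ 1 : m, k ∈ ℕ₊, f ∈ I_+}`. -/
def Dc (c : ℝ) (I : Set ℝ) : Set ℝ :=
  {x : ℝ | ∃ (m k : ℕ) (f : ℝ), 0 < m ∧ 0 < k ∧ f ∈ Iplus I ∧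
    x = ((m : ℝ) - 1 + f + (k : ℝ) * c) / m} ∩ Set.Iic 1

open AddSubmonoid

/-- `I_+` coincides with the additive closure of `I` intersected with `(-∞, 1]`. -/
lemma Iplus_eq_closure (I : Set ℝ) :
    Iplus I = (AddSubmonoid.closure I : Set ℝ) ∩ Set.Iic 1 := by
  ext x
  constructor
  · rintro (⟨hx1, r, hr, a, n, ha, hn, rfl⟩ | h)
    · refine ⟨sum_mem fun i _ => ?_, hx1⟩
      rw [show ((n i : ℝ)) * a i = n i • a i from (nsmul_eq_mul _ _).symm]
      exact nsmul_mem (subset_closure (ha i)) _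
    · simp only [Set.mem_singleton_iff] at h
      subst h
      exact ⟨zero_mem _, by norm_num⟩
  · rintro ⟨hx, hx1⟩
    obtain ⟨l, hl, rfl⟩ := AddSubmonoid.exists_list_of_mem_closure hx
    rcases l with _ | ⟨b, t⟩
    · right; simp
    · left
      refine ⟨hx1, (b :: t).length, by simp, fun i => (b :: t)[i.1], fun _ => 1, ?_, ?_, ?_⟩
      · intro i; exact hl _ (List.getElem_mem _)
      · intro i; norm_num
      · simp only [Nat.cast_one, one_mul]
        exact (Fin.sum_univ_getElem _).symm


lemma closure_nonneg {I : Set ℝ} (hI : I ⊆ Set.Icc 0 1) {x : ℝ}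
    (hx : x ∈ AddSubmonoid.closure I) : 0 ≤ x := by
  obtain ⟨l, hl, rfl⟩ := AddSubmonoid.exists_list_of_mem_closure hx
  exact List.sum_nonneg fun y hy => (hI (hl y hy)).1

lemma I_subset_Dset {I : Set ℝ} (hI : I ⊆ Set.Icc 0 1) : I ⊆ Dset I := by
  intro a ha
  refine ⟨⟨1, a, one_pos, ?_, by norm_num⟩, (hI ha).2⟩
  rw [Iplus_eq_closure]
  exact ⟨AddSubmonoid.subset_closure ha, (hI ha).2⟩

/-- Structure of elements of the additive closure of `D(I)`. -/
lemma key {I : Set ℝ} (hI : I ⊆ Set.Icc 0 1) {f : ℝ}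
    (hf : f ∈ AddSubmonoid.closure (Dset I)) :
    f ∈ AddSubmonoid.closure I ∨ 1 ≤ f ∨
      ∃ m₀ : ℕ, 2 ≤ m₀ ∧ ∃ g ∈ AddSubmonoid.closure I,
        0 ≤ g ∧ (m₀ : ℝ) * f = (m₀ : ℝ) - 1 + g := by
  -- each case forces nonnegativity
  have nonneg : ∀ y : ℝ, (y ∈ AddSubmonoid.closure I ∨ 1 ≤ y ∨
      ∃ m₀ : ℕ, 2 ≤ m₀ ∧ ∃ g ∈ AddSubmonoid.closure I,
        0 ≤ g ∧ (m₀ : ℝ) * y = (m₀ : ℝ) - 1 + g) → 0 ≤ y := by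
    rintro y (h | h | ⟨m₀, hm₀, g, hg, hg0, heq⟩)
    · exact closure_nonneg hI h
    · linarith
    · have hm₀' : (0 : ℝ) < m₀ := by positivity
      have h2 : (2:ℝ) ≤ m₀ := by exact_mod_cast hm₀
      nlinarith
  induction hf using AddSubmonoid.closure_induction with
  | mem b hb =>
    obtain ⟨⟨m, g, hm, hg, rfl⟩, hb1⟩ := hb
    rw [Iplus_eq_closure] at hg
    obtain ⟨hgcl, hg1⟩ := hg
    rcases eq_or_lt_of_le (show 1 ≤ m from hm) with hm1 | hm2
    · left
      have : ((m : ℝ) - 1 + g) / m = g := by rw [← hm1]; norm_num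
      rw [this]; exact hgcl
    · right; right
      refine ⟨m, hm2, g, hgcl, closure_nonneg hI hgcl, ?_⟩
      have hm' : (m : ℝ) ≠ 0 := by positivity
      field_simp
  | zero => left; exact zero_mem _
  | add x y hx hy ihx ihy =>
    have hx0 : 0 ≤ x := nonneg x ihx
    have hy0 : 0 ≤ y := nonneg y ihy
    rcases ihx with ihx | ihx | ⟨m₁, hm₁, g₁, hg₁, hg₁0, heq₁⟩
    · rcases ihy with ihy | ihy | ⟨m₂, hm₂, g₂, hg₂, hg₂0, heq₂⟩
      · left; exact add_mem ihx ihy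
      · right; left; linarith
      · right; right
        refine ⟨m₂, hm₂, g₂ + (m₂ : ℝ) * x, ?_, by positivity, by ring_nf; linarith⟩
        · refine add_mem hg₂ ?_
          rw [show ((m₂ : ℝ)) * x = m₂ • x from (nsmul_eq_mul _ _).symm]
          exact nsmul_mem ihx _
    · right; left; linarith
    · rcases ihy with ihy | ihy | ⟨m₂, hm₂, g₂, hg₂, hg₂0, heq₂⟩
      · right; right
        refine ⟨m₁, hm₁, g₁ + (m₁ : ℝ) * y, ?_, by positivity, by ring_nf; linarith⟩
        · refine add_mem hg₁ ?_
          rw [show ((m₁ : ℝ)) * y = m₁ • y from (nsmul_eq_mul _ _).symm]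
          exact nsmul_mem ihy _
      · right; left; linarith
      · right; left
        have h₁ : (2:ℝ) ≤ m₁ := by exact_mod_cast hm₁
        have h₂ : (2:ℝ) ≤ m₂ := by exact_mod_cast hm₂
        -- x ≥ (m₁-1)/m₁ ≥ 1/2, similarly y
        have hx2 : 1/2 ≤ x := by nlinarith
        have hy2 : 1/2 ≤ y := by nlinarith
        linarith

theorem Dc_of_D (I : Set ℝ) (hI : I ⊆ Set.Icc 0 1) (c : ℝ) (hc : 0 < c) :
    Dc c (Dset I) = Dc c I := by
  ext x
  constructor
  · rintro ⟨⟨m, k, f, hm, hk, hf, rfl⟩, hx1⟩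
    rw [Iplus_eq_closure] at hf
    obtain ⟨hfcl, hf1⟩ := hf
    have hm' : (0:ℝ) < m := by positivity
    have hkc : (0:ℝ) < k * c := by
      have : (1:ℝ) ≤ k := by exact_mod_cast hk
      nlinarith
    have hfb : f + k * c ≤ 1 := by
      rw [Set.mem_Iic, div_le_one hm'] at hx1
      linarith
    rcases key hI hfcl with h | h | ⟨m₀, hm₀, g, hg, hg0, heq⟩
    · exact ⟨⟨m, k, f, hm, hk, by rw [Iplus_eq_closure]; exact ⟨h, hf1⟩, rfl⟩, hx1⟩
    · linarith
    · have hm₀' : (0:ℝ) < m₀ := by positivity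
      have h2 : (2:ℝ) ≤ m₀ := by exact_mod_cast hm₀
      have hg1 : g ≤ 1 := by nlinarith
      refine ⟨⟨m * m₀, k * m₀, g, Nat.mul_pos hm (by omega), Nat.mul_pos hk (by omega),
        by rw [Iplus_eq_closure]; exact ⟨hg, hg1⟩, ?_⟩, hx1⟩
      have hfval : f = ((m₀ : ℝ) - 1 + g) / m₀ := by
        rw [eq_div_iff (by positivity)]; linarith
      rw [hfval]
      push_cast
      field_simp
      ring
  · rintro ⟨⟨m, k, f, hm, hk, hf, rfl⟩, hx1⟩
    refine ⟨⟨m, k, f, hm, hk, ?_, rfl⟩, hx1⟩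
    rw [Iplus_eq_closure] at hf ⊢
    exact ⟨AddSubmonoid.closure_mono (I_subset_Dset hI) hf.1, hf.2⟩
end

section
/- Let I ⊆ [0,1] be a set of real numbers satisfying the descending chain condition. Then D(I) satisfies the descending chain condition. -/
/-- A set of reals satisfies the descending chain condition (DCC) if it contains
no infinite strictly decreasing sequence. -/
def DCC (S : Set ℝ) : Prop := ¬ ∃ f : ℕ → ℝ, (∀ n, f n ∈ S) ∧ StrictAnti f

lemma dcc_iff_isWF (S : Set ℝ) : DCC S ↔ S.IsWF := by
  rw [Set.isWF_iff_no_descending_seq]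
  constructor
  · intro h f hf hmem
    exact h ⟨f, fun n => hmem n, hf⟩
  · rintro h ⟨f, hmem, hf⟩
    exact h f hf fun n => hmem n

lemma Iplus_subset_closure (I : Set ℝ) :
    Iplus I ⊆ (AddSubmonoid.closure I : Set ℝ) := by
  rintro x hx
  obtain h | h := hx
  · obtain ⟨-, r, -, a, n, ha, -, rfl⟩ := h
    refine AddSubmonoid.sum_mem _ fun i _ => ?_
    have := AddSubmonoid.nsmul_mem (AddSubmonoid.closure I)
      (AddSubmonoid.subset_closure (ha i)) (n i)
    simpa [nsmul_eq_mul] using this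
  · simp only [Set.mem_singleton_iff] at h
    subst h
    exact AddSubmonoid.zero_mem _

lemma Iplus_nonneg {I : Set ℝ} (hI : I ⊆ Set.Icc 0 1) {f : ℝ} (hf : f ∈ Iplus I) : 0 ≤ f := by
  obtain h | h := hf
  · obtain ⟨-, r, -, a, n, ha, -, rfl⟩ := h
    exact Finset.sum_nonneg fun i _ =>
      mul_nonneg (Nat.cast_nonneg _) (hI (ha i)).1
  · simp only [Set.mem_singleton_iff] at h
    simp [h]

lemma Iplus_isPWO {I : Set ℝ} (hI : I ⊆ Set.Icc 0 1) (hDCC : DCC I) :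
    (Iplus I).IsPWO := by
  have hWF : I.IsWF := (dcc_iff_isWF I).1 hDCC
  have hclo : ((AddSubmonoid.closure I : AddSubmonoid ℝ) : Set ℝ).IsPWO :=
    Set.IsPWO.addSubmonoid_closure (fun x hx => (hI hx).1) hWF.isPWO
  exact hclo.mono (Iplus_subset_closure I)

lemma isPWO_biUnion_finset {ι : Type*} (s : Finset ι) (f : ι → Set ℝ)
    (h : ∀ i ∈ s, (f i).IsPWO) : (⋃ i ∈ s, f i).IsPWO := by
  classical
  induction s using Finset.induction with
  | empty => simp
  | insert _ _ hnotmem ih =>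
    rw [Finset.set_biUnion_insert]
    exact (h _ (Finset.mem_insert_self _ _)).union
      (ih fun i hi => h i (Finset.mem_insert_of_mem hi))

theorem Dset_DCC (I : Set ℝ) (hI : I ⊆ Set.Icc 0 1) (hDCC : DCC I) :
    DCC (Dset I) := by
  have hIp : (Iplus I).IsPWO := Iplus_isPWO hI hDCC
  rintro ⟨g, hg, hanti⟩
  set t : ℝ := g 1 with ht
  have ht1 : t < 1 := lt_of_lt_of_le (hanti zero_lt_one) (hg 0).2
  have htpos : 0 < 1 - t := by linarith
  set M : ℕ := ⌈1 / (1 - t)⌉₊ with hM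
  set K : Set ℝ :=
    ⋃ m ∈ Finset.Icc 1 M, (fun f : ℝ => ((m : ℝ) - 1 + f) / m) '' Iplus I with hK
  have hKpwo : K.IsPWO := by
    refine isPWO_biUnion_finset _ _ fun m hm => ?_
    have hm1 : 1 ≤ m := (Finset.mem_Icc.1 hm).1
    have hmpos : (0 : ℝ) < m := by exact_mod_cast hm1
    refine hIp.image_of_monotone fun x y hxy => ?_
    gcongr
  have hmem : ∀ n, g (n + 1) ∈ K := by
    intro n
    obtain ⟨⟨m, f, hmpos, hf, hgn⟩, -⟩ := hg (n + 1)
    have hfnn : 0 ≤ f := Iplus_nonneg hI hf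
    have hmpos' : (0 : ℝ) < m := by exact_mod_cast hmpos
    have hle : g (n + 1) ≤ t := by
      rcases Nat.eq_or_lt_of_le (Nat.one_le_iff_ne_zero.2 (Nat.succ_ne_zero n)) with h | h
      · exact le_of_eq (congrArg g h.symm)
      · exact le_of_lt (hanti h)
    have hlb : ((m : ℝ) - 1) / m ≤ g (n + 1) := by
      rw [hgn]
      gcongr
      linarith
    have hmle : (m : ℝ) * (1 - t) ≤ 1 := by
      have : (m : ℝ) - 1 ≤ t * m := by
        have := hlb.trans hle
        calc (m : ℝ) - 1 = (((m : ℝ) - 1) / m) * m := by field_simp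
          _ ≤ t * m := by
            exact mul_le_mul_of_nonneg_right this (le_of_lt hmpos')
      nlinarith
    have hmM : m ≤ M := by
      have h1 : (m : ℝ) ≤ 1 / (1 - t) := by
        rw [le_div_iff₀ htpos]; exact hmle
      have h2 : (1 : ℝ) / (1 - t) ≤ (M : ℝ) := Nat.le_ceil _
      exact_mod_cast h1.trans h2
    refine Set.mem_biUnion (Finset.mem_Icc.2 ⟨hmpos, hmM⟩) ?_
    exact ⟨f, hf, hgn.symm⟩
  have hKwf : K.IsWF := hKpwo.isWF
  rw [Set.isWF_iff_no_descending_seq] at hKwf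
  exact hKwf (fun n => g (n + 1)) (fun a b hab => hanti (by omega)) fun n => hmem n
end
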